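/- Let 1 ≤ p ≤ 2 and let x_1,…,x_n, y_1,…,y_n ∈ ℓ_p. Then Σ_{i=1}^n Σ_{j=1}^n ( ‖x_i − x_j‖_p^p + ‖y_i − y_j‖_p^p ) ≤ 2 · Σ_{i=1}^n Σ_{j=1}^n ‖x_i − y_j‖_p^p. (That is, ℓ_p has generalized roundness p for 1 ≤ p ≤ 2.) -/

import Mathlib

open scoped ENNReal
open Real MeasureTheory Set Finset

lemma my_one_sub_cos_le (x : ℝ) : 1 - Real.cos x ≤ x ^ 2 / 2 := by
  have habs : ∀ t : ℝ, 0 < t → Real.sin t ^ 2 ≤ t ^ 2 := by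
    intro t ht
    rcases le_or_gt 1 t with h1 | h1
    · nlinarith [Real.neg_one_le_sin t, Real.sin_le_one t]
    · nlinarith [Real.sin_lt ht, Real.sin_nonneg_of_nonneg_of_le_pi ht.le
        (by nlinarith [Real.pi_gt_three]), Real.sin_le_one t]
  have hkey : ∀ x : ℝ, 0 < x → 1 - Real.cos x ≤ x ^ 2 / 2 := by
    intro x hx
    have h1 := Real.cos_sq (x / 2)
    have h2 := Real.sin_sq_add_cos_sq (x / 2)
    have h3 := habs (x / 2) (by linarith)
    have : (2 : ℝ) * (x / 2) = x := by ring
    rw [this] at h1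
    nlinarith
  rcases lt_trichotomy x 0 with h | h | h
  · have := hkey (-x) (by linarith)
    rw [Real.cos_neg] at this; nlinarith
  · simp [h]
  · exact hkey x h

noncomputable def myK (p : ℝ) : ℝ := ∫ u in Ioi (0:ℝ), (1 - Real.cos u) * u ^ (-1 - p)

open intervalIntegral in
lemma my_integrable (p : ℝ) (hp0 : 0 < p) (hp2 : p < 2) (c : ℝ) :
    IntegrableOn (fun s : ℝ => (1 - Real.cos (c * s)) * s ^ (-1 - p)) (Ioi 0) := by
  have hmeas : ∀ t : Set ℝ, AEStronglyMeasurable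
      (fun s : ℝ => (1 - Real.cos (c * s)) * s ^ (-1 - p)) (volume.restrict t) := by
    intro t
    apply Measurable.aestronglyMeasurable
    fun_prop
  have key : ∀ x : ℝ, 1 - Real.cos x ≤ x ^ 2 / 2 := my_one_sub_cos_le
  have h01 : IntegrableOn (fun s : ℝ => (1 - Real.cos (c * s)) * s ^ (-1 - p)) (Ioc 0 1) := by
    have hg : IntegrableOn (fun s : ℝ => c ^ 2 / 2 * s ^ (1 - p)) (Ioc (0:ℝ) 1) := by
      have h := (intervalIntegrable_rpow' (a := 0) (b := 1) (r := 1 - p) (by linarith))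
      rw [intervalIntegrable_iff_integrableOn_Ioc_of_le (by norm_num : (0:ℝ) ≤ 1)] at h
      exact h.const_mul _
    refine hg.mono' (hmeas _) ?_
    filter_upwards [ae_restrict_mem measurableSet_Ioc] with s hs
    have hs0 : 0 < s := hs.1
    have h1 : 0 ≤ 1 - Real.cos (c * s) := by nlinarith [Real.cos_le_one (c * s)]
    have h2 : (0:ℝ) ≤ s ^ (-1 - p) := Real.rpow_nonneg hs0.le _
    rw [Real.norm_of_nonneg (mul_nonneg h1 h2)]
    calc (1 - Real.cos (c * s)) * s ^ (-1 - p) ≤ (c * s) ^ 2 / 2 * s ^ (-1 - p) := by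
          exact mul_le_mul_of_nonneg_right (key _) h2
      _ = c ^ 2 / 2 * (s ^ (2:ℝ) * s ^ (-1 - p)) := by
          rw [mul_pow, ← Real.rpow_two s]
          ring
      _ = c ^ 2 / 2 * s ^ (1 - p) := by
          rw [← Real.rpow_add hs0, show (2:ℝ) + (-1 - p) = 1 - p by ring]
  have h1i : IntegrableOn (fun s : ℝ => (1 - Real.cos (c * s)) * s ^ (-1 - p)) (Ioi 1) := by
    have hg : IntegrableOn (fun s : ℝ => 2 * s ^ (-1 - p)) (Ioi (1:ℝ)) :=
      (integrableOn_Ioi_rpow_of_lt (by linarith) one_pos).const_mul 2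
    refine hg.mono' (hmeas _) ?_
    filter_upwards [ae_restrict_mem measurableSet_Ioi] with s hs
    have hs0 : (0:ℝ) < s := lt_trans one_pos hs
    have h1 : 0 ≤ 1 - Real.cos (c * s) := by nlinarith [Real.cos_le_one (c * s)]
    have h2 : (0:ℝ) ≤ s ^ (-1 - p) := Real.rpow_nonneg hs0.le _
    rw [Real.norm_of_nonneg (mul_nonneg h1 h2)]
    have : 1 - Real.cos (c * s) ≤ 2 := by nlinarith [Real.neg_one_le_cos (c * s)]
    exact mul_le_mul_of_nonneg_right this h2
  have : Ioi (0:ℝ) = Set.Ioc 0 1 ∪ Set.Ioi 1 := (Set.Ioc_union_Ioi_eq_Ioi (by norm_num : (0:ℝ) ≤ 1)).symm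
  rw [this]
  exact h01.union h1i

lemma my_repr (p : ℝ) (hp0 : 0 < p) (hp2 : p < 2) (t : ℝ) :
    ∫ s in Ioi (0:ℝ), (1 - Real.cos (t * s)) * s ^ (-1 - p) = |t| ^ p * myK p := by
  rcases eq_or_ne t 0 with rfl | ht
  · simp [Real.zero_rpow hp0.ne']
  · have hb : 0 < |t| := abs_pos.mpr ht
    have hcong : ∫ s in Ioi (0:ℝ), (1 - Real.cos (t * s)) * s ^ (-1 - p)
        = ∫ s in Ioi (0:ℝ), |t| ^ (1 + p) * ((1 - Real.cos (|t| * s)) * (|t| * s) ^ (-1 - p)) := by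
      refine setIntegral_congr_fun measurableSet_Ioi (fun s hs => ?_)
      have hs0 : (0:ℝ) < s := hs
      have hcos : Real.cos (t * s) = Real.cos (|t| * s) := by
        rcases abs_choice t with h | h
        · rw [h]
        · rw [h]; rw [neg_mul, Real.cos_neg]
      rw [hcos, Real.mul_rpow hb.le hs0.le]
      have h4 : |t| ^ (1 + p) * |t| ^ (-1 - p) = 1 := by
        rw [← Real.rpow_add hb, show (1 + p) + (-1 - p) = 0 by ring, Real.rpow_zero]
      linear_combination (-((1 - Real.cos (|t| * s)) * s ^ (-1 - p))) * h4
    rw [hcong]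
    rw [integral_const_mul]
    have := integral_comp_mul_left_Ioi (fun u : ℝ => (1 - Real.cos u) * u ^ (-1 - p)) 0 hb
    simp only [mul_zero] at this
    rw [this]
    rw [smul_eq_mul, ← mul_assoc, ← myK]
    congr 1
    rw [← Real.rpow_neg_one |t|, ← Real.rpow_add hb]
    congr 1; ring

lemma myK_pos (p : ℝ) (hp0 : 0 < p) (hp2 : p < 2) : 0 < myK p := by
  have hint : IntegrableOn (fun s : ℝ => (1 - Real.cos s) * s ^ (-1 - p)) (Ioi 0) := by
    simpa using my_integrable p hp0 hp2 1
  have hnn : 0 ≤ᵐ[volume.restrict (Ioi (0:ℝ))]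
      fun s : ℝ => (1 - Real.cos s) * s ^ (-1 - p) := by
    filter_upwards [ae_restrict_mem measurableSet_Ioi] with s hs
    have hs0 : (0:ℝ) < s := hs
    have : (0:ℝ) ≤ s ^ (-1 - p) := Real.rpow_nonneg hs0.le _
    simp only [Pi.zero_apply]
    nlinarith [Real.cos_le_one s]
  rw [myK, setIntegral_pos_iff_support_of_nonneg_ae hnn hint]
  have hsub : Ioc (2:ℝ) 3 ⊆
      Function.support (fun s : ℝ => (1 - Real.cos s) * s ^ (-1 - p)) ∩ Ioi 0 := by
    intro s hs
    have h2 : (2:ℝ) < s := hs.1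
    have h3 : s ≤ 3 := hs.2
    have hs0 : (0:ℝ) < s := by linarith
    constructor
    · have hpi : s ≤ π := by nlinarith [Real.pi_gt_d6]
      have hcos : Real.cos s < Real.cos 0 := by
        apply Real.cos_lt_cos_of_nonneg_of_le_pi le_rfl hpi hs0
      rw [Real.cos_zero] at hcos
      have hr : (0:ℝ) < s ^ (-1 - p) := Real.rpow_pos_of_pos hs0 _
      simp only [Function.mem_support]
      exact (mul_pos (by linarith) hr).ne'
    · exact hs0
  calc (0:ℝ≥0∞) < volume (Ioc (2:ℝ) 3) := by simp; norm_num
    _ ≤ _ := measure_mono hsub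

lemma my_cos_sum {n : ℕ} (u v : Fin n → ℝ) :
    2 * ∑ i, ∑ j, Real.cos (u i - v j) ≤
      (∑ i, ∑ j, Real.cos (u i - u j)) + ∑ i, ∑ j, Real.cos (v i - v j) := by
  have h : ∀ w z : Fin n → ℝ, ∑ i, ∑ j, Real.cos (w i - z j)
      = (∑ i, Real.cos (w i)) * (∑ i, Real.cos (z i))
        + (∑ i, Real.sin (w i)) * (∑ i, Real.sin (z i)) := by
    intro w z
    simp only [Real.cos_sub, Finset.sum_add_distrib, ← Finset.mul_sum, ← Finset.sum_mul]
  rw [h, h, h]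
  nlinarith [sq_nonneg ((∑ i, Real.cos (u i)) - ∑ i, Real.cos (v i)),
    sq_nonneg ((∑ i, Real.sin (u i)) - ∑ i, Real.sin (v i))]

lemma my_ptwise (p : ℝ) {n : ℕ} (a b : Fin n → ℝ) (s : ℝ) (hs : s ∈ Ioi (0:ℝ)) :
    ∑ i, ∑ j, ((1 - Real.cos ((a i - a j) * s)) * s ^ (-1 - p)
        + (1 - Real.cos ((b i - b j) * s)) * s ^ (-1 - p)) ≤
      ∑ i, ∑ j, 2 * ((1 - Real.cos ((a i - b j) * s)) * s ^ (-1 - p)) := by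
  have hw : (0:ℝ) ≤ s ^ (-1 - p) := Real.rpow_nonneg (le_of_lt hs) _
  have hkey := my_cos_sum (fun i => a i * s) (fun i => b i * s)
  simp only [← sub_mul] at hkey
  have lhs_eq : ∑ i, ∑ j, ((1 - Real.cos ((a i - a j) * s)) * s ^ (-1 - p)
        + (1 - Real.cos ((b i - b j) * s)) * s ^ (-1 - p))
      = ((n^2 - ∑ i, ∑ j, Real.cos ((a i - a j) * s))
          + (n^2 - ∑ i, ∑ j, Real.cos ((b i - b j) * s))) * s ^ (-1 - p) := by
    simp [Finset.sum_add_distrib, Finset.sum_sub_distrib, ← Finset.sum_mul,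
      Finset.sum_const, Finset.card_univ, sub_mul, add_mul]
    ring
  have rhs_eq : ∑ i, ∑ j, 2 * ((1 - Real.cos ((a i - b j) * s)) * s ^ (-1 - p))
      = (2 * (n^2 - ∑ i, ∑ j, Real.cos ((a i - b j) * s))) * s ^ (-1 - p) := by
    simp [Finset.sum_sub_distrib, ← Finset.sum_mul, ← Finset.mul_sum,
      Finset.sum_const, Finset.card_univ, sub_mul, add_mul]
    ring
  rw [lhs_eq, rhs_eq]
  apply mul_le_mul_of_nonneg_right _ hw
  linarith

lemma my_scalar_lt (p : ℝ) (hp0 : 0 < p) (hp2 : p < 2) {n : ℕ} (a b : Fin n → ℝ) :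
    ∑ i, ∑ j, (|a i - a j| ^ p + |b i - b j| ^ p) ≤ 2 * ∑ i, ∑ j, |a i - b j| ^ p := by
  have hK := myK_pos p hp0 hp2
  rw [← mul_le_mul_iff_right₀ hK]
  have hrep : ∀ c : ℝ, myK p * |c| ^ p
      = ∫ s in Ioi (0:ℝ), (1 - Real.cos (c * s)) * s ^ (-1 - p) := fun c => by
    rw [my_repr p hp0 hp2 c, mul_comm]
  have hint := my_integrable p hp0 hp2
  calc myK p * ∑ i, ∑ j, (|a i - a j| ^ p + |b i - b j| ^ p)
      = ∑ i, ∑ j, (myK p * |a i - a j| ^ p + myK p * |b i - b j| ^ p) := by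
        simp [Finset.mul_sum, mul_add]
    _ = ∑ i, ∑ j, ∫ s in Ioi (0:ℝ), ((1 - Real.cos ((a i - a j) * s)) * s ^ (-1 - p)
          + (1 - Real.cos ((b i - b j) * s)) * s ^ (-1 - p)) := by
        refine Finset.sum_congr rfl fun i _ => Finset.sum_congr rfl fun j _ => ?_
        rw [hrep, hrep, ← integral_add (hint _) (hint _)]
    _ = ∫ s in Ioi (0:ℝ), ∑ i, ∑ j, ((1 - Real.cos ((a i - a j) * s)) * s ^ (-1 - p)
          + (1 - Real.cos ((b i - b j) * s)) * s ^ (-1 - p)) := by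
        symm
        rw [integral_finset_sum]
        · refine Finset.sum_congr rfl fun i _ => ?_
          rw [integral_finset_sum]
          exact fun j _ => (hint _).add (hint _)
        · exact fun i _ => integrable_finset_sum _ fun j _ => (hint _).add (hint _)
    _ ≤ ∫ s in Ioi (0:ℝ), ∑ i, ∑ j, 2 * ((1 - Real.cos ((a i - b j) * s)) * s ^ (-1 - p)) := by
        refine setIntegral_mono_on ?_ ?_ measurableSet_Ioi (my_ptwise p a b)
        · exact integrable_finset_sum _ fun i _ =>
            integrable_finset_sum _ fun j _ => (hint _).add (hint _)
        · exact integrable_finset_sum _ fun i _ =>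
            integrable_finset_sum _ fun j _ => (hint _).const_mul 2
    _ = ∑ i, ∑ j, ∫ s in Ioi (0:ℝ), 2 * ((1 - Real.cos ((a i - b j) * s)) * s ^ (-1 - p)) := by
        rw [integral_finset_sum _ fun i _ =>
          integrable_finset_sum _ fun j _ => (hint _).const_mul 2]
        refine Finset.sum_congr rfl fun i _ => ?_
        rw [integral_finset_sum _ fun j _ => (hint _).const_mul 2]
    _ = myK p * (2 * ∑ i, ∑ j, |a i - b j| ^ p) := by
        have : ∀ i j, ∫ s in Ioi (0:ℝ), 2 * ((1 - Real.cos ((a i - b j) * s)) * s ^ (-1 - p))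
            = 2 * (myK p * |a i - b j| ^ p) := fun i j => by
          rw [integral_const_mul, ← hrep]
        simp only [this, Finset.mul_sum]
        exact Finset.sum_congr rfl fun i _ => Finset.sum_congr rfl fun j _ => by ring

lemma my_scalar_two {n : ℕ} (a b : Fin n → ℝ) :
    ∑ i, ∑ j, (|a i - a j| ^ (2:ℝ) + |b i - b j| ^ (2:ℝ)) ≤
      2 * ∑ i, ∑ j, |a i - b j| ^ (2:ℝ) := by
  have habs : ∀ x : ℝ, |x| ^ (2:ℝ) = x ^ (2:ℕ) := fun x => by
    rw [show (2:ℝ) = ((2:ℕ):ℝ) by norm_num, Real.rpow_natCast, sq_abs]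
  simp only [habs]
  have expand : ∀ u v : Fin n → ℝ, ∑ i, ∑ j, (u i - v j) ^ (2:ℕ)
      = (n : ℝ) * ∑ i, (u i)^2 + (n : ℝ) * ∑ i, (v i)^2 - 2 * (∑ i, u i) * (∑ i, v i) := by
    intro u v
    simp only [sub_sq, Finset.sum_add_distrib, Finset.sum_sub_distrib, ← Finset.sum_mul,
      ← Finset.mul_sum, Finset.sum_const, Finset.card_univ, Fintype.card_fin, nsmul_eq_mul]
    ring
  simp only [Finset.sum_add_distrib, expand]
  nlinarith [sq_nonneg ((∑ i, a i) - ∑ i, b i)]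

lemma my_scalar (p : ℝ) (hp1 : 1 ≤ p) (hp2 : p ≤ 2) {n : ℕ} (a b : Fin n → ℝ) :
    ∑ i, ∑ j, (|a i - a j| ^ p + |b i - b j| ^ p) ≤ 2 * ∑ i, ∑ j, |a i - b j| ^ p := by
  rcases lt_or_eq_of_le hp2 with h2 | rfl
  · exact my_scalar_lt p (by linarith) h2 a b
  · exact my_scalar_two a b

/-- For `1 ≤ p ≤ 2` and `x₁,…,xₙ, y₁,…,yₙ ∈ ℓ_p`:
`Σᵢⱼ (‖xᵢ − xⱼ‖^p + ‖yᵢ − yⱼ‖^p) ≤ 2·Σᵢⱼ ‖xᵢ − yⱼ‖^p`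
(i.e. `ℓ_p` has generalized roundness `p`). -/
theorem stmt10 (p : ℝ) (hp1 : 1 ≤ p) (hp2 : p ≤ 2) (n : ℕ)
    (x y : Fin n → lp (fun _ : ℕ => ℝ) (ENNReal.ofReal p)) :
    ∑ i, ∑ j, (‖x i - x j‖ ^ p + ‖y i - y j‖ ^ p) ≤
      2 * ∑ i, ∑ j, ‖x i - y j‖ ^ p := by
  have hp0 : 0 < p := lt_of_lt_of_le one_pos hp1
  have htoReal : (ENNReal.ofReal p).toReal = p := ENNReal.toReal_ofReal hp0.le
  have hPt : 0 < (ENNReal.ofReal p).toReal := by rw [htoReal]; exact hp0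
  have hnorm : ∀ f : lp (fun _ : ℕ => ℝ) (ENNReal.ofReal p),
      ‖f‖ ^ p = ∑' k, |f k| ^ p := by
    intro f
    have h := lp.norm_rpow_eq_tsum hPt f
    rw [htoReal] at h
    simpa [Real.norm_eq_abs] using h
  have hsum : ∀ f : lp (fun _ : ℕ => ℝ) (ENNReal.ofReal p),
      Summable (fun k => |f k| ^ p) := by
    intro f
    have h := (lp.memℓp f).summable hPt
    rw [htoReal] at h
    simpa [Real.norm_eq_abs] using h
  set L : ℕ → ℝ := fun k => ∑ i, ∑ j, (|(x i - x j) k| ^ p + |(y i - y j) k| ^ p) with hL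
  set R : ℕ → ℝ := fun k => ∑ i, ∑ j, |(x i - y j) k| ^ p with hR
  have hsumL : ∀ (i j : Fin n), Summable (fun k =>
      |(x i - x j) k| ^ p + |(y i - y j) k| ^ p) :=
    fun i j => (hsum _).add (hsum _)
  have hLsummable : Summable L := by
    apply summable_sum
    intro i _
    apply summable_sum
    intro j _
    exact hsumL i j
  have hRsummable : Summable R := by
    apply summable_sum
    intro i _
    apply summable_sum
    intro j _
    exact hsum _
  have hLt : ∑' k, L k = ∑ i, ∑ j,
      ((∑' k, |(x i - x j) k| ^ p) + ∑' k, |(y i - y j) k| ^ p) := by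
    rw [hL, Summable.tsum_finsetSum (fun i (_ : i ∈ Finset.univ) => summable_sum fun j _ => hsumL i j)]
    refine Finset.sum_congr rfl fun i _ => ?_
    rw [Summable.tsum_finsetSum (fun j (_ : j ∈ Finset.univ) => hsumL i j)]
    exact Finset.sum_congr rfl fun j _ => Summable.tsum_add (hsum _) (hsum _)
  have hRt : ∑' k, R k = ∑ i, ∑ j, ∑' k, |(x i - y j) k| ^ p := by
    rw [hR, Summable.tsum_finsetSum (fun i (_ : i ∈ Finset.univ) => summable_sum fun j _ => hsum _)]
    refine Finset.sum_congr rfl fun i _ => ?_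
    rw [Summable.tsum_finsetSum (fun j (_ : j ∈ Finset.univ) => hsum _)]
  have hkey : ∀ k, L k ≤ 2 * R k := by
    intro k
    rw [hL, hR]
    simp only [lp.coeFn_sub, Pi.sub_apply]
    exact my_scalar p hp1 hp2 (fun i => x i k) (fun i => y i k)
  calc ∑ i, ∑ j, (‖x i - x j‖ ^ p + ‖y i - y j‖ ^ p)
      = ∑' k, L k := by simp only [hnorm]; rw [hLt]
    _ ≤ ∑' k, 2 * R k := Summable.tsum_le_tsum hkey hLsummable (hRsummable.mul_left 2)
    _ = 2 * ∑' k, R k := tsum_mul_left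
    _ = 2 * ∑ i, ∑ j, ‖x i - y j‖ ^ p := by rw [hRt]; simp only [hnorm]
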